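/- Let Y, X, Z, W be random variables with E[Z|W] = L(Z|W) (the conditional mean of Z given W is linear in W) and E[(X − L(X|W))(Z − L(Z|W))] ≠ 0. Then the linear IV coefficient β_IV = E[(Y − L(Y|W))(Z − L(Z|W))] / E[(X − L(X|W))(Z − L(Z|W))] equals E[(Y − E[Y|W])(Z − E[Z|W])] / E[(X − E[X|W])(Z − E[Z|W])]. -/

import Mathlib

open MeasureTheory

-- L2 * L2 is integrable
lemma aux_int_mul {Ω : Type*} [MeasurableSpace Ω] {μ : Measure Ω} {f g : Ω → ℝ}
    (hf : MemLp f 2 μ) (hg : MemLp g 2 μ) :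
    Integrable (fun ω => f ω * g ω) μ := by
  have h : MemLp (f • g) 1 μ := hg.smul hf
  exact memLp_one_iff_integrable.mp h

-- condexp of an L2 function is L2
lemma aux_memLp_condexp {Ω : Type*} {m : MeasurableSpace Ω} [m0 : MeasurableSpace Ω]
    {μ : Measure Ω} [IsFiniteMeasure μ] (hm : m ≤ m0) {f : Ω → ℝ}
    (hf : MemLp f 2 μ) : MemLp (μ[f|m]) 2 μ := by
  haveI : SigmaFinite (μ.trim hm) := inferInstance
  set g : Ω → ℝ := ((condExpL2 ℝ ℝ hm (hf.toLp f) : Lp ℝ 2 μ) : Ω → ℝ) with hg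
  have hgc : g =ᵐ[μ] μ[f|m] := by
    refine ae_eq_condExp_of_forall_setIntegral_eq hm (hf.integrable one_le_two)
      (fun s hs hμs => integrableOn_condExpL2_of_measure_ne_top hm hμs.ne _)
      (fun s hs hμs => ?_) (aestronglyMeasurable_condExpL2 hm _)
    rw [integral_condExpL2_eq hm (hf.toLp f) hs hμs.ne]
    exact integral_congr_ae (ae_restrict_of_ae hf.coeFn_toLp)
  exact (Lp.memLp _).ae_eq hgc

-- orthogonality: an m-measurable L2 function is orthogonal to Z - E[Z|m]
lemma aux_orth {Ω : Type*} {m : MeasurableSpace Ω} [m0 : MeasurableSpace Ω] (μ : Measure Ω)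
    [IsFiniteMeasure μ] (hm : m ≤ m0) {g Z : Ω → ℝ}
    (hgm : StronglyMeasurable[m] g) (hg : MemLp g 2 μ) (hZ : MemLp Z 2 μ) :
    ∫ ω, g ω * (Z ω - (μ[Z|m]) ω) ∂μ = 0 := by
  haveI : SigmaFinite (μ.trim hm) := inferInstance
  have hCZ : MemLp (μ[Z|m]) 2 μ := aux_memLp_condexp hm hZ
  have h1 : Integrable (fun ω => g ω * Z ω) μ := aux_int_mul hg hZ
  have h2 : Integrable (fun ω => g ω * (μ[Z|m]) ω) μ := aux_int_mul hg hCZ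
  have hpull : μ[g * Z|m] =ᵐ[μ] g * μ[Z|m] :=
    condExp_mul_of_stronglyMeasurable_left hgm h1 (hZ.integrable one_le_two)
  have he : ∫ ω, g ω * (Z ω - (μ[Z|m]) ω) ∂μ
      = ∫ ω, (g ω * Z ω - g ω * (μ[Z|m]) ω) ∂μ := by
    congr 1; funext ω; ring
  rw [he, integral_sub h1 h2]
  have he2 : ∫ ω, g ω * (μ[Z|m]) ω ∂μ = ∫ ω, g ω * Z ω ∂μ := by
    calc ∫ ω, g ω * (μ[Z|m]) ω ∂μ = ∫ ω, (μ[g * Z|m]) ω ∂μ :=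
          integral_congr_ae hpull.symm
      _ = ∫ ω, (g * Z) ω ∂μ := integral_condExp hm
      _ = ∫ ω, g ω * Z ω ∂μ := rfl
  rw [he2]; ring

lemma aux_main {Ω : Type*} {m : MeasurableSpace Ω} [m0 : MeasurableSpace Ω]
    (μ : Measure Ω) [IsProbabilityMeasure μ] (hm : m ≤ m0)
    {f Z Lf LZ : Ω → ℝ}
    (hf : MemLp f 2 μ) (hZ : MemLp Z 2 μ)
    (hLf : StronglyMeasurable[m] Lf) (hLf2 : MemLp Lf 2 μ) (hLZ2 : MemLp LZ 2 μ)
    (hlin : μ[Z|m] =ᵐ[μ] LZ) :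
    (∫ ω, (f ω - Lf ω) * (Z ω - LZ ω) ∂μ) =
      (∫ ω, (f ω - (μ[f|m]) ω) * (Z ω - (μ[Z|m]) ω) ∂μ) := by
  have hCf : MemLp (μ[f|m]) 2 μ := aux_memLp_condexp hm hf
  have hCZ : MemLp (μ[Z|m]) 2 μ := aux_memLp_condexp hm hZ
  have key : ∫ ω, (fun ω => (μ[f|m]) ω - Lf ω) ω * (Z ω - (μ[Z|m]) ω) ∂μ = 0 :=
    aux_orth μ hm (stronglyMeasurable_condExp.sub hLf) (hCf.sub hLf2) hZ
  have i1 : Integrable (fun ω => (f ω - (μ[f|m]) ω) * (Z ω - (μ[Z|m]) ω)) μ :=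
    aux_int_mul (hf.sub hCf) (hZ.sub hCZ)
  have i2 : Integrable (fun ω => ((μ[f|m]) ω - Lf ω) * (Z ω - (μ[Z|m]) ω)) μ :=
    aux_int_mul (hCf.sub hLf2) (hZ.sub hCZ)
  have step1 : (∫ ω, (f ω - Lf ω) * (Z ω - LZ ω) ∂μ)
      = ∫ ω, (f ω - Lf ω) * (Z ω - (μ[Z|m]) ω) ∂μ := by
    refine integral_congr_ae ?_
    filter_upwards [hlin] with ω h
    rw [h]
  have step2 : (∫ ω, (f ω - Lf ω) * (Z ω - (μ[Z|m]) ω) ∂μ)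
      = ∫ ω, (f ω - (μ[f|m]) ω) * (Z ω - (μ[Z|m]) ω) ∂μ := by
    have hsplit : (fun ω => (f ω - Lf ω) * (Z ω - (μ[Z|m]) ω))
        = fun ω => (f ω - (μ[f|m]) ω) * (Z ω - (μ[Z|m]) ω) +
            ((μ[f|m]) ω - Lf ω) * (Z ω - (μ[Z|m]) ω) := by
      funext ω; ring
    rw [hsplit, integral_add i1 i2, key, add_zero]
  rw [step1, step2]

/-- Population linear projection of `R` onto the random vector `W`:
`L(R|W) = Wᵀ E[WWᵀ]⁻¹ E[WR]`. -/
noncomputable def Lproj {Ω : Type*} [MeasurableSpace Ω] (μ : Measure Ω) (k : ℕ)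
    (W : Ω → Fin k → ℝ) (R : Ω → ℝ) (ω : Ω) : ℝ :=
  ∑ i, (((Matrix.of fun i j => ∫ ω', W ω' i * W ω' j ∂μ : Matrix (Fin k) (Fin k) ℝ))⁻¹.mulVec
      (fun i => ∫ ω', W ω' i * R ω' ∂μ)) i * W ω i

/-- Conditional expectation of `R` given the σ-algebra generated by the random vector `W`. -/
noncomputable def condExpW {Ω : Type*} [inst : MeasurableSpace Ω] (μ : Measure Ω) (k : ℕ)
    (W : Ω → Fin k → ℝ) (R : Ω → ℝ) : Ω → ℝ :=
  MeasureTheory.condExp (m₀ := inst) (MeasurableSpace.comap W inferInstance) μ R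
theorem stmt_10 {Ω : Type*} [MeasurableSpace Ω] (μ : Measure Ω) [IsProbabilityMeasure μ]
    {k : ℕ} (W : Ω → Fin k → ℝ) (Y X Z : Ω → ℝ)
    (hW : Measurable W)
    (hY : MeasureTheory.MemLp Y 2 μ) (hX : MeasureTheory.MemLp X 2 μ)
    (hZ : MeasureTheory.MemLp Z 2 μ)
    (hWi : ∀ i, MeasureTheory.MemLp (fun ω => W ω i) 2 μ)
    (hinv : IsUnit ((Matrix.of fun i j => ∫ ω, W ω i * W ω j ∂μ : Matrix (Fin k) (Fin k) ℝ)))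
    (hlin : ∀ᵐ ω ∂μ, condExpW μ k W Z ω = Lproj μ k W Z ω)
    (hden : (∫ ω, (X ω - Lproj μ k W X ω) * (Z ω - Lproj μ k W Z ω) ∂μ) ≠ 0) :
    (∫ ω, (Y ω - Lproj μ k W Y ω) * (Z ω - Lproj μ k W Z ω) ∂μ) /
        (∫ ω, (X ω - Lproj μ k W X ω) * (Z ω - Lproj μ k W Z ω) ∂μ) =
      (∫ ω, (Y ω - condExpW μ k W Y ω) * (Z ω - condExpW μ k W Z ω) ∂μ) /
        (∫ ω, (X ω - condExpW μ k W X ω) * (Z ω - condExpW μ k W Z ω) ∂μ) := by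
  have hm : MeasurableSpace.comap W inferInstance ≤ ‹MeasurableSpace Ω› := hW.comap_le
  have hWm : ∀ i, Measurable[MeasurableSpace.comap W inferInstance] (fun ω => W ω i) :=
    fun i => (measurable_pi_apply i).comp (Measurable.of_comap_le le_rfl)
  have hLsm : ∀ R : Ω → ℝ,
      StronglyMeasurable[MeasurableSpace.comap W inferInstance] (Lproj μ k W R) := by
    intro R
    refine Measurable.stronglyMeasurable ?_
    unfold Lproj
    exact Finset.measurable_sum _ fun i _ => (measurable_const.mul (hWm i))
  have hLmem : ∀ R : Ω → ℝ, MemLp (Lproj μ k W R) 2 μ := fun R =>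
    memLp_finset_sum _ fun i _ => ((hWi i).const_mul _)
  have hlin' : (μ[Z|MeasurableSpace.comap W inferInstance]) =ᵐ[μ] Lproj μ k W Z := hlin
  have h1 := aux_main μ hm hY hZ (hLsm Y) (hLmem Y) (hLmem Z) hlin'
  have h2 := aux_main μ hm hX hZ (hLsm X) (hLmem X) (hLmem Z) hlin'
  simp only [condExpW]
  rw [h1, h2]
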